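/- For every integer δ ≥ 2 and every peak Λ ≤ 1/2, there exists a swap Schelling game (G,b,Λ) on a δ-regular graph G, a swap equilibrium σ, and a strategy profile σ* such that DoI(σ*)/DoI(σ) ≥ δ(δ+1)/(2δ+1). -/

import Mathlib

open Finset

namespace SwapSchelling

variable {V : Type*} [Fintype V] [DecidableEq V]

open scoped Classical in
/-- The closed neighborhood `N[v]` of a node `v` in `G`, as a `Finset`. -/
noncomputable def closedNbhd (G : SimpleGraph V) (v : V) : Finset V :=
  univ.filter (fun u => u = v ∨ G.Adj v u)

open scoped Classical in
/-- The degree `δ(v)` of a node `v` in `G`. -/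
noncomputable def deg (G : SimpleGraph V) (v : V) : ℕ :=
  (univ.filter (fun u => G.Adj v u)).card

/-- The maximum degree `Δ(G)`. -/
noncomputable def maxDeg (G : SimpleGraph V) : ℕ := univ.sup (deg G)

/-- The minimum degree `δ(G)`. -/
noncomputable def minDeg (G : SimpleGraph V) : ℕ := sInf (Set.range (deg G))

open scoped Classical in
/-- `frac G c v` is the fraction of nodes in the closed neighborhood of `v` that have
the same color as `v` (that is, `f_i(σ)` for the agent `i` occupying node `v`). -/
noncomputable def frac (G : SimpleGraph V) (c : V → Bool) (v : V) : ℝ :=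
  (((closedNbhd G v).filter (fun u => c u = c v)).card : ℝ) / ((closedNbhd G v).card : ℝ)

/-- The coloring obtained from `c` after the agents on nodes `v` and `w` swap positions. -/
def swapColor (c : V → Bool) (v w : V) : V → Bool := c ∘ Equiv.swap v w

/-- A single-peaked utility function `p` with peak at `Λ`: `p 0 = 0`, `p` is strictly
increasing on `[0,Λ]`, `p Λ = 1`, and `p x = p (Λ(1-x)/(1-Λ))` for `x ∈ [Λ,1]`. -/
structure IsSinglePeaked (p : ℝ → ℝ) (Λ : ℝ) : Prop where
  peak_mem : Λ ∈ Set.Ioo (0 : ℝ) 1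
  map_zero : p 0 = 0
  strictMonoOn : StrictMonoOn p (Set.Icc 0 Λ)
  map_peak : p Λ = 1
  symm : ∀ x ∈ Set.Icc Λ 1, p x = p (Λ * (1 - x) / (1 - Λ))

/-- A strategy profile: a 2-coloring of the nodes with exactly `b` blue (`true`) nodes. -/
def IsProfile (c : V → Bool) (b : ℕ) : Prop :=
  (univ.filter (fun v => c v = true)).card = b

/-- The structural data of a swap Schelling game `(G, b, Λ)` with utility function `p`:
`G` is connected, there are `b` blue agents with `1 ≤ b ≤ n/2`, and `p` is a
single-peaked utility function with peak `Λ`. -/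
structure IsGame (G : SimpleGraph V) (b : ℕ) (Λ : ℝ) (p : ℝ → ℝ) : Prop where
  connected : G.Connected
  one_le_b : 1 ≤ b
  b_le_half : 2 * b ≤ Fintype.card V
  singlePeaked : IsSinglePeaked p Λ

/-- The swap of the two (differently colored) agents occupying nodes `v` and `w`
is profitable: both agents strictly increase their utility. -/
def ProfitableSwap (G : SimpleGraph V) (p : ℝ → ℝ) (c : V → Bool) (v w : V) : Prop :=
  c v ≠ c w ∧
  p (frac G (swapColor c v w) w) > p (frac G c v) ∧
  p (frac G (swapColor c v w) v) > p (frac G c w)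

/-- A swap equilibrium: no profitable swap exists. -/
def IsSwapEquilibrium (G : SimpleGraph V) (p : ℝ → ℝ) (c : V → Bool) : Prop :=
  ∀ v w, ¬ ProfitableSwap G p c v w

open scoped Classical in
/-- The degree of integration: the number of non-segregated agents. -/
noncomputable def DoI (G : SimpleGraph V) (c : V → Bool) : ℕ :=
  (univ.filter (fun v => frac G c v ≠ 1)).card

open scoped Classical in
/-- The number of monochromatic edges of `G` under the coloring `c`. -/
noncomputable def Phi (G : SimpleGraph V) (c : V → Bool) : ℕ :=
  (G.edgeFinset.filter (fun e => ∀ u ∈ e, ∀ w ∈ e, c u = c w)).card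

open scoped Classical in
/-- The number of edges of `G`. -/
noncomputable def numEdges (G : SimpleGraph V) : ℕ :=
  (univ.filter (fun e : Sym2 V => e ∈ G.edgeSet)).card

/-- A finset of nodes is an independent set of `G`. -/
def IsIndepSet (G : SimpleGraph V) (s : Finset V) : Prop :=
  ∀ u ∈ s, ∀ w ∈ s, ¬ G.Adj u w

open scoped Classical in
/-- The independence number `α(G)`. -/
noncomputable def indepNum (G : SimpleGraph V) : ℕ :=
  univ.sup (fun s : Finset V => if IsIndepSet G s then s.card else 0)

open scoped Classical in
/-- The degree of `v` inside the subgraph of `G` induced by the node set `s`. -/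
noncomputable def degOn (G : SimpleGraph V) (s : Finset V) (v : V) : ℕ :=
  (s.filter (fun u => G.Adj v u)).card


open scoped Classical

section PLemmas

variable {p : ℝ → ℝ} {Λ : ℝ} (hp : IsSinglePeaked p Λ)
include hp

lemma p_mono {a b : ℝ} (h0 : 0 ≤ a) (hab : a ≤ b) (hb : b ≤ Λ) : p a ≤ p b :=
  hp.strictMonoOn.monotoneOn ⟨h0, hab.trans hb⟩ ⟨h0.trans hab, hb⟩ hab

lemma fold_nonneg {x : ℝ} (hx1 : x ≤ 1) : 0 ≤ Λ * (1 - x) / (1 - Λ) := by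
  have h0 := hp.peak_mem.1
  have h1 := hp.peak_mem.2
  exact div_nonneg (mul_nonneg h0.le (by linarith)) (by linarith)

lemma fold_le_peak {x : ℝ} (hx : Λ ≤ x) : Λ * (1 - x) / (1 - Λ) ≤ Λ := by
  have h0 := hp.peak_mem.1
  have h1 := hp.peak_mem.2
  rw [div_le_iff₀ (by linarith)]
  nlinarith

lemma p_one : p 1 = 0 := by
  have h := hp.symm 1 ⟨hp.peak_mem.2.le, le_refl _⟩
  simpa [hp.map_zero] using h

lemma p_nonneg {x : ℝ} (h0 : 0 ≤ x) (h1 : x ≤ 1) : 0 ≤ p x := by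
  rcases le_or_gt x Λ with h | h
  · have := p_mono hp (le_refl (0:ℝ)) h0 h
    rw [hp.map_zero] at this; exact this
  · rw [hp.symm x ⟨h.le, h1⟩]
    have := p_mono hp (le_refl (0:ℝ)) (fold_nonneg hp h1) (fold_le_peak hp h.le)
    rw [hp.map_zero] at this; exact this

/-- The key comparison: an agent surrounded by `d` opposite-color neighbours out of `d+1`
is weakly worse off than any agent with at least one same-color node in its closed nbhd. -/
lemma p_compare (hΛ : Λ ≤ 1/2) {d r : ℕ} (hd1 : 1 ≤ d) (hr1 : 1 ≤ r) (hrd : r ≤ d) :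
    p ((d : ℝ) / ((d:ℝ) + 1)) ≤ p ((r : ℝ) / ((d:ℝ) + 1)) := by
  have h0 := hp.peak_mem.1
  have h1 := hp.peak_mem.2
  have hΛ1 : (0:ℝ) < 1 - Λ := by linarith
  have hD : (0:ℝ) < (d:ℝ) + 1 := by positivity
  have hdR : (1:ℝ) ≤ (d:ℝ) := by exact_mod_cast hd1
  have hrR : (1:ℝ) ≤ (r:ℝ) := by exact_mod_cast hr1
  have hrdR : (r:ℝ) ≤ (d:ℝ) := by exact_mod_cast hrd
  have hX : (0:ℝ) < ((d:ℝ)+1)*(1-Λ) := mul_pos hD hΛ1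
  have hmem : (d:ℝ)/((d:ℝ)+1) ∈ Set.Icc Λ 1 := by
    constructor
    · rw [le_div_iff₀ hD]; nlinarith
    · rw [div_le_one hD]; linarith
  have hfold : p ((d:ℝ)/((d:ℝ)+1)) = p (Λ * (1 - (d:ℝ)/((d:ℝ)+1)) / (1 - Λ)) :=
    hp.symm _ hmem
  have harg : Λ * (1 - (d:ℝ)/((d:ℝ)+1)) / (1 - Λ) = Λ / (((d:ℝ)+1) * (1 - Λ)) := by
    field_simp
    try ring
  rw [hfold, harg]
  rcases le_or_gt ((r:ℝ)/((d:ℝ)+1)) Λ with h | h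
  · refine p_mono hp (div_nonneg h0.le hX.le) ?_ h
    rw [div_le_div_iff₀ hX hD]
    have k1 : ((d:ℝ)+1) * (1-Λ) ≤ (r:ℝ) * (((d:ℝ)+1)*(1-Λ)) :=
      le_mul_of_one_le_left hX.le hrR
    nlinarith
  · have hmem' : (r:ℝ)/((d:ℝ)+1) ∈ Set.Icc Λ 1 :=
      ⟨h.le, by rw [div_le_one hD]; linarith⟩
    have hh : Λ * ((d:ℝ)+1) < (r:ℝ) := (lt_div_iff₀ hD).mp h
    rw [hp.symm _ hmem']
    have harg2 : Λ * (1 - (r:ℝ)/((d:ℝ)+1)) / (1 - Λ)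
        = Λ * ((d:ℝ)+1-(r:ℝ)) / (((d:ℝ)+1)*(1-Λ)) := by
      field_simp
      try ring
    rw [harg2]
    have key1 : (1:ℝ) ≤ (d:ℝ)+1-(r:ℝ) := by linarith
    have key2 : Λ ≤ Λ*((d:ℝ)+1-(r:ℝ)) := le_mul_of_one_le_right h0.le key1
    have key3 : Λ*((d:ℝ)+1-(r:ℝ)) ≤ Λ*(((d:ℝ)+1)*(1-Λ)) := by
      nlinarith [mul_pos h0 (show (0:ℝ) < (r:ℝ) - Λ*((d:ℝ)+1) by linarith)]
    refine p_mono hp (div_nonneg h0.le hX.le) ?_ ?_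
    · rw [div_le_div_iff₀ hX hX]
      nlinarith [mul_le_mul_of_nonneg_right key2 hX.le]
    · rw [div_le_iff₀ hX]
      nlinarith

end PLemmas

section FracLemmas

variable (G : SimpleGraph V) (c : V → Bool) (v : V)

lemma self_mem_closedNbhd : v ∈ closedNbhd G v := by simp [closedNbhd]

lemma card_closedNbhd : (closedNbhd G v).card = deg G v + 1 := by
  have h : closedNbhd G v = insert v (univ.filter (fun u => G.Adj v u)) := by
    ext u; simp [closedNbhd, or_comm]
  rw [h, card_insert_of_notMem (by simp), deg]

lemma frac_nonneg : 0 ≤ frac G c v := by unfold frac; positivity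

lemma frac_le_one : frac G c v ≤ 1 := by
  unfold frac
  have hpos : (0:ℝ) < ((closedNbhd G v).card : ℝ) := by
    exact_mod_cast card_pos.2 ⟨v, self_mem_closedNbhd G v⟩
  rw [div_le_one hpos]
  exact_mod_cast card_le_card (filter_subset _ _)

lemma frac_eq_one_iff : frac G c v = 1 ↔ ∀ u ∈ closedNbhd G v, c u = c v := by
  have hpos : 0 < (closedNbhd G v).card := card_pos.2 ⟨v, self_mem_closedNbhd G v⟩
  rw [frac, div_eq_one_iff_eq (by exact_mod_cast hpos.ne'), Nat.cast_inj]
  constructor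
  · intro h u hu
    have heq : (closedNbhd G v).filter (fun u => c u = c v) = closedNbhd G v :=
      eq_of_subset_of_card_le (filter_subset _ _) (le_of_eq h.symm)
    exact (filter_eq_self.mp heq) u hu
  · intro h; rw [filter_eq_self.mpr h]

lemma frac_ne_one {u : V} (hu : u ∈ closedNbhd G v) (hc : c u ≠ c v) : frac G c v ≠ 1 :=
  fun h => hc ((frac_eq_one_iff G c v).mp h u hu)

end FracLemmas

lemma profitableSwap_comm (G : SimpleGraph V) (p : ℝ → ℝ) (c : V → Bool) (v w : V) :
    ProfitableSwap G p c v w ↔ ProfitableSwap G p c w v := by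
  have hs : swapColor c v w = swapColor c w v := by
    funext u; simp [swapColor, Equiv.swap_comm]
  unfold ProfitableSwap
  rw [hs]
  constructor
  · rintro ⟨h1, h2, h3⟩; exact ⟨h1.symm, h3, h2⟩
  · rintro ⟨h1, h2, h3⟩; exact ⟨h1.symm, h3, h2⟩

/-- Main structural lemma: on a `d`-regular graph, any coloring whose blue nodes form an
independent set is a swap equilibrium (for a single-peaked utility with peak `Λ ≤ 1/2`). -/
lemma isSwapEquilibrium_of_indep (G : SimpleGraph V) {d : ℕ} (hd1 : 1 ≤ d)
    (hreg : ∀ v, deg G v = d) {Λ : ℝ} {p : ℝ → ℝ} (hΛ : Λ ≤ 1/2)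
    (hp : IsSinglePeaked p Λ) {c : V → Bool}
    (hind : ∀ v w, c v = true → c w = true → ¬ G.Adj v w) :
    IsSwapEquilibrium G p c := by
  suffices H : ∀ v w, c v = true → c w = false → ¬ ProfitableSwap G p c v w by
    intro v w hpr
    have hne := hpr.1
    cases hv : c v <;> cases hw : c w
    · rw [hv, hw] at hne; exact hne rfl
    · exact H w v hw hv ((profitableSwap_comm G p c v w).mp hpr)
    · exact H v w hv hw hpr
    · rw [hv, hw] at hne; exact hne rfl
  rintro v w hv hw ⟨hne, h1, h2⟩
  have hvw : v ≠ w := by intro h; rw [h, hw] at hv; exact Bool.noConfusion hv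
  set c' := swapColor c v w with hc'
  have hc'v : c' v = false := by
    simp only [hc', swapColor, Function.comp_apply, Equiv.swap_apply_left, hw]
  have hc'w : c' w = true := by
    simp only [hc', swapColor, Function.comp_apply, Equiv.swap_apply_right, hv]
  have hc'u : ∀ u, u ≠ v → u ≠ w → c' u = c u := by
    intro u h1 h2
    simp only [hc', swapColor, Function.comp_apply, Equiv.swap_apply_of_ne_of_ne h1 h2]
  have hnb : ∀ u, G.Adj v u → c u = false := by
    intro u hadj
    cases hu : c u
    · rfl
    · exact absurd hadj (hind v u hv hu)
  have hcard : (closedNbhd G v).card = d + 1 := by rw [card_closedNbhd, hreg]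
  have hwnonneg : 0 ≤ p (frac G c w) :=
    p_nonneg hp (frac_nonneg G c w) (frac_le_one G c w)
  by_cases hadj : G.Adj v w
  · -- w is a neighbour of v: the red agent moving to v gets fraction d/(d+1)
    have hA : (closedNbhd G v).filter (fun u => c' u = c' v) = (closedNbhd G v).erase w := by
      ext u
      simp only [mem_filter, mem_erase, hc'v]
      constructor
      · rintro ⟨hu, hcu⟩
        refine ⟨?_, hu⟩
        rintro rfl
        rw [hc'w] at hcu
        exact Bool.noConfusion hcu
      · rintro ⟨huw, hu⟩
        refine ⟨hu, ?_⟩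
        by_cases huv : u = v
        · subst huv; exact hc'v
        · rw [hc'u u huv huw]
          rcases mem_filter.mp hu with ⟨-, h | h⟩
          · exact absurd h huv
          · exact hnb u h
    have hwmem : w ∈ closedNbhd G v := by simp [closedNbhd, hadj]
    have hnum : ((closedNbhd G v).filter (fun u => c' u = c' v)).card = d := by
      rw [hA, card_erase_of_mem hwmem, hcard]; rfl
    have hfrac1 : frac G c' v = (d : ℝ) / ((d:ℝ) + 1) := by
      rw [frac, hnum, hcard]; push_cast; ring
    have hcardw : (closedNbhd G w).card = d + 1 := by rw [card_closedNbhd, hreg]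
    set r := ((closedNbhd G w).filter (fun u => c u = c w)).card with hrdef
    have hr1 : 1 ≤ r :=
      card_pos.2 ⟨w, mem_filter.2 ⟨self_mem_closedNbhd G w, rfl⟩⟩
    have hvmemw : v ∈ closedNbhd G w := by simp [closedNbhd, hadj.symm]
    have hrd : r ≤ d := by
      have hsub : (closedNbhd G w).filter (fun u => c u = c w) ⊆ (closedNbhd G w).erase v := by
        intro u hu
        rcases mem_filter.mp hu with ⟨hmem, hcu⟩
        refine mem_erase.2 ⟨?_, hmem⟩
        rintro rfl
        rw [hv, hw] at hcu
        exact Bool.noConfusion hcu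
      have := card_le_card hsub
      rwa [card_erase_of_mem hvmemw, hcardw] at this
    have hfrac2 : frac G c w = (r : ℝ) / ((d:ℝ) + 1) := by
      rw [frac, ← hrdef, hcardw]; push_cast; ring
    rw [hfrac1, hfrac2] at h2
    exact absurd h2 (not_lt.2 (p_compare hp hΛ hd1 hr1 hrd))
  · -- w is not a neighbour of v: the red agent moving to v becomes fully segregated
    have hone : frac G c' v = 1 := by
      rw [frac_eq_one_iff]
      intro u hu
      rw [hc'v]
      rcases mem_filter.mp hu with ⟨-, h | h⟩
      · rw [h]; exact hc'v
      · have huv : u ≠ v := (G.ne_of_adj h).symm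
        have huw : u ≠ w := by rintro rfl; exact hadj h
        rw [hc'u u huv huw]; exact hnb u h
    rw [hone, p_one hp] at h2
    linarith


-- ==================== the specific graph ====================

section Construction

/-- Vertex `(t, s, i)`: node `i` on side `s` of the `t`-th copy of `K_{δ,δ}`. -/
abbrev Vert (δ : ℕ) := Fin δ × Bool × Fin δ

/-- Copies of `K_{δ,δ}` minus the edge `(t,false,0)-(t,true,0)`, arranged in a cycle with
bridge edges `(t,false,0)-(t+1,true,0)`. This graph is `δ`-regular and connected. -/
def adjδ (δ : ℕ) [NeZero δ] (a b : Vert δ) : Prop :=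
  a.2.1 ≠ b.2.1 ∧
    ((a.1 = b.1 ∧ ¬(a.2.2 = 0 ∧ b.2.2 = 0)) ∨
     (a.2.2 = 0 ∧ b.2.2 = 0 ∧
       ((a.2.1 = false ∧ b.1 = a.1 + 1) ∨ (b.2.1 = false ∧ a.1 = b.1 + 1))))

def Gδ (δ : ℕ) [NeZero δ] : SimpleGraph (Vert δ) where
  Adj := adjδ δ
  symm := by
    constructor
    rintro a b ⟨h1, h2⟩
    refine ⟨Ne.symm h1, ?_⟩
    rcases h2 with ⟨he, hn⟩ | ⟨ha, hb, hor⟩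
    · exact Or.inl ⟨he.symm, fun h => hn ⟨h.2, h.1⟩⟩
    · rcases hor with ⟨hf, he⟩ | ⟨hf, he⟩
      · exact Or.inr ⟨hb, ha, Or.inr ⟨hf, he⟩⟩
      · exact Or.inr ⟨hb, ha, Or.inl ⟨hf, he⟩⟩
  loopless := by constructor; rintro a ⟨h1, -⟩; exact h1 rfl

variable {δ : ℕ} [NeZero δ]

lemma adj_charac (t t' : Fin δ) (s s' : Bool) (i j : Fin δ) :
    (Gδ δ).Adj (t, s, i) (t', s', j) ↔
      s' = !s ∧ ((t' = t ∧ ¬(i = 0 ∧ j = 0)) ∨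
        (i = 0 ∧ j = 0 ∧ ((s = false ∧ t' = t + 1) ∨ (s = true ∧ t' = t - 1)))) := by
  constructor
  · rintro ⟨h1, h2⟩
    have hs : s' = !s := by cases s <;> cases s' <;> simp_all
    refine ⟨hs, ?_⟩
    rcases h2 with ⟨he, hn⟩ | ⟨h0, h0', hor⟩
    · exact Or.inl ⟨he.symm, hn⟩
    · refine Or.inr ⟨h0, h0', ?_⟩
      rcases hor with ⟨hf, he⟩ | ⟨hf, he⟩
      · exact Or.inl ⟨hf, he⟩
      · have hst : s = true := by
          subst hs; cases s <;> simp_all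
        exact Or.inr ⟨hst, eq_sub_iff_add_eq.mpr he.symm⟩
  · rintro ⟨hs, h2⟩
    subst hs
    refine ⟨by cases s <;> simp, ?_⟩
    rcases h2 with ⟨he, hn⟩ | ⟨h0, h0', hor⟩
    · exact Or.inl ⟨he.symm, hn⟩
    · refine Or.inr ⟨h0, h0', ?_⟩
      rcases hor with ⟨hf, he⟩ | ⟨hf, he⟩
      · exact Or.inl ⟨hf, he⟩
      · subst hf
        exact Or.inr ⟨rfl, (eq_sub_iff_add_eq.mp he).symm⟩


lemma one_ne_zero_fin (hδ : 2 ≤ δ) : (1 : Fin δ) ≠ 0 := by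
  intro hh
  have := congrArg Fin.val hh
  rw [Fin.val_one'] at this
  simp at this
  omega

lemma succ_ne_self_fin (hδ : 2 ≤ δ) (t : Fin δ) : t + 1 ≠ t := by
  intro h
  have : (1 : Fin δ) = 0 := by
    have := congrArg (fun x => x - t) h
    simpa [add_comm, add_sub_cancel_right, sub_self] using this
  exact one_ne_zero_fin hδ this

open scoped Classical in
lemma deg_Gδ (hδ : 2 ≤ δ) (v : Vert δ) : deg (Gδ δ) v = δ := by
  classical
  obtain ⟨t, s, i⟩ := v
  by_cases hi : i = 0
  · subst hi
    have hset : (univ.filter (fun u => (Gδ δ).Adj (t, s, 0) u))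
        = insert ((if s then t - 1 else t + 1), !s, (0 : Fin δ))
            ((univ.erase (0 : Fin δ)).image (fun j => (t, !s, j))) := by
      ext ⟨t', s', j⟩
      simp only [mem_filter, mem_univ, true_and, mem_insert, mem_image, mem_erase,
        adj_charac, Prod.mk.injEq]
      constructor
      · rintro ⟨rfl, ⟨rfl, hj⟩ | ⟨rfl, hbr⟩⟩
        · exact Or.inr ⟨j, ⟨hj, trivial⟩, rfl, rfl, rfl⟩
        · left
          refine ⟨?_, rfl, rfl⟩
          rcases hbr with ⟨rfl, rfl⟩ | ⟨rfl, rfl⟩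
          · simp
          · simp
      · rintro (⟨rfl, rfl, rfl⟩ | ⟨a, ⟨ha, -⟩, rfl, rfl, rfl⟩)
        · refine ⟨rfl, Or.inr ⟨rfl, ?_⟩⟩
          cases s
          · exact Or.inl ⟨rfl, by simp⟩
          · exact Or.inr ⟨rfl, by simp⟩
        · exact ⟨rfl, Or.inl ⟨rfl, ha⟩⟩
    rw [deg, hset]
    have hnotmem : ((if s then t - 1 else t + 1), !s, (0 : Fin δ)) ∉
        ((univ.erase (0 : Fin δ)).image (fun j => (t, !s, j))) := by
      intro h
      rcases mem_image.mp h with ⟨j0, hj0, heq⟩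
      have : j0 = (0 : Fin δ) := congrArg (fun x => x.2.2) heq
      exact (mem_erase.mp hj0).1 this
    rw [card_insert_of_notMem hnotmem,
      card_image_of_injective _ (fun a b h => congrArg (fun x => x.2.2) h),
      card_erase_of_mem (mem_univ _), card_univ, Fintype.card_fin]
    omega
  · have hset : (univ.filter (fun u => (Gδ δ).Adj (t, s, i) u))
        = univ.image (fun j => (t, !s, j)) := by
      ext ⟨t', s', j⟩
      simp only [mem_filter, mem_univ, true_and, mem_insert, mem_image, mem_erase,
        adj_charac, Prod.mk.injEq]
      constructor
      · rintro ⟨rfl, ⟨rfl, -⟩ | ⟨h0, -⟩⟩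
        · exact ⟨j, rfl, rfl, rfl⟩
        · exact absurd h0 hi
      · rintro ⟨a, rfl, rfl, rfl⟩
        exact ⟨rfl, Or.inl ⟨rfl, fun h => hi h.1⟩⟩
    rw [deg, hset,
      card_image_of_injective _ (fun a b h => congrArg (fun x => x.2.2) h),
      card_univ, Fintype.card_fin]

open Fin.NatCast Fin.CommRing in
lemma conn_Gδ (hδ : 2 ≤ δ) : (Gδ δ).Connected := by
  have h1 : (1 : Fin δ) ≠ 0 := one_ne_zero_fin hδ
  have hubAdjR : ∀ t (j : Fin δ), (Gδ δ).Adj (t, false, 1) (t, true, j) := by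
    intro t j
    rw [adj_charac]
    exact ⟨rfl, Or.inl ⟨rfl, fun h => h1 h.1⟩⟩
  have hLR : ∀ t (i : Fin δ), (Gδ δ).Adj (t, false, i) (t, true, 1) := by
    intro t i
    rw [adj_charac]
    exact ⟨rfl, Or.inl ⟨rfl, fun h => h1 h.2⟩⟩
  have hreachHub : ∀ (t : Fin δ) (s : Bool) (i : Fin δ),
      (Gδ δ).Reachable (t, s, i) (t, false, 1) := by
    intro t s i
    cases s
    · exact ((hLR t i).reachable).trans ((hubAdjR t 1).reachable.symm)
    · exact (hubAdjR t i).reachable.symm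
  have hbridge : ∀ t : Fin δ, (Gδ δ).Adj (t, false, 0) (t + 1, true, 0) := by
    intro t
    rw [adj_charac]
    exact ⟨rfl, Or.inr ⟨rfl, rfl, Or.inl ⟨rfl, rfl⟩⟩⟩
  have hstep : ∀ t : Fin δ, (Gδ δ).Reachable (t, false, 1) (t + 1, false, 1) := by
    intro t
    have r1 : (Gδ δ).Reachable (t, false, 1) (t, false, 0) :=
      (hreachHub t false 0).symm
    exact r1.trans ((hbridge t).reachable.trans (hreachHub (t+1) true 0))
  have hreach0 : ∀ k : ℕ,
      (Gδ δ).Reachable ((0 : Fin δ), false, 1) (((k : Fin δ)), false, 1) := by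
    intro k
    induction k with
    | zero => rw [Nat.cast_zero]
    | succ n ih =>
        have hc : ((n + 1 : ℕ) : Fin δ) = (n : Fin δ) + 1 := by push_cast; ring
        rw [hc]; exact ih.trans (hstep _)
  have hhub : ∀ t : Fin δ, (Gδ δ).Reachable ((0 : Fin δ), false, 1) (t, false, 1) := by
    intro t
    have := hreach0 t.val
    rwa [Fin.cast_val_eq_self] at this
  rw [SimpleGraph.connected_iff]
  refine ⟨?_, ⟨((0 : Fin δ), false, (1 : Fin δ))⟩⟩
  intro u v
  obtain ⟨tu, su, iu⟩ := u
  obtain ⟨tv, sv, iv⟩ := v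
  exact ((hreachHub tu su iu).trans
    (((hhub tu).symm.trans (hhub tv)).trans (hreachHub tv sv iv).symm))


/-- The equilibrium profile: blue agents fill side `false` of copy `0`. -/
def cAδ (δ : ℕ) [NeZero δ] : Vert δ → Bool := fun a => decide (a.1 = 0 ∧ a.2.1 = false)

/-- The well-integrated profile: blue agents sit on node `0` of side `false` of each copy. -/
def cBδ (δ : ℕ) [NeZero δ] : Vert δ → Bool := fun a => decide (a.2.1 = false ∧ a.2.2 = 0)

open scoped Classical in
lemma profileA : (univ.filter (fun a => cAδ δ a = true)).card = δ := by
  classical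
  have hset : (univ.filter (fun a => cAδ δ a = true))
      = univ.image (fun i : Fin δ => ((0 : Fin δ), false, i)) := by
    ext ⟨t, s, i⟩
    simp only [mem_filter, mem_univ, true_and, mem_image, cAδ, decide_eq_true_eq,
      Prod.mk.injEq]
    constructor
    · rintro ⟨rfl, rfl⟩; exact ⟨i, rfl, rfl, rfl⟩
    · rintro ⟨a, rfl, rfl, rfl⟩; exact ⟨rfl, rfl⟩
  rw [hset, card_image_of_injective _ (fun a b h => congrArg (fun x => x.2.2) h),
    card_univ, Fintype.card_fin]

open scoped Classical in
lemma profileB : (univ.filter (fun a => cBδ δ a = true)).card = δ := by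
  classical
  have hset : (univ.filter (fun a => cBδ δ a = true))
      = univ.image (fun t : Fin δ => (t, false, (0 : Fin δ))) := by
    ext ⟨t, s, i⟩
    simp only [mem_filter, mem_univ, true_and, mem_image, cBδ, decide_eq_true_eq,
      Prod.mk.injEq]
    constructor
    · rintro ⟨rfl, rfl⟩; exact ⟨t, rfl, rfl, rfl⟩
    · rintro ⟨a, rfl, rfl, rfl⟩; exact ⟨rfl, rfl⟩
  rw [hset, card_image_of_injective _ (fun a b h => congrArg (fun x => x.1) h),
    card_univ, Fintype.card_fin]

lemma blueA_indep (v w : Vert δ) (hv : cAδ δ v = true) (hw : cAδ δ w = true) :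
    ¬ (Gδ δ).Adj v w := by
  intro h
  obtain ⟨tv, sv, iv⟩ := v
  obtain ⟨tw, sw, iw⟩ := w
  rw [adj_charac] at h
  simp only [cAδ, decide_eq_true_eq] at hv hw
  rw [hv.2, hw.2] at h
  exact Bool.noConfusion h.1

open scoped Classical in
lemma doiA_le (hδ : 2 ≤ δ) : DoI (Gδ δ) (cAδ δ) ≤ 2 * δ + 1 := by
  classical
  have hsub : univ.filter (fun v => frac (Gδ δ) (cAδ δ) v ≠ 1)
      ⊆ insert (((1 : Fin δ)), true, (0 : Fin δ))
          (univ.image (fun q : Bool × Fin δ => ((0 : Fin δ), q))) := by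
    intro a ha
    rw [mem_filter] at ha
    by_contra hmem
    simp only [mem_insert, mem_image, mem_univ, true_and, not_or, not_exists] at hmem
    obtain ⟨hne1, hne0⟩ := hmem
    apply ha.2
    rw [frac_eq_one_iff]
    obtain ⟨t, s, i⟩ := a
    have ht0 : t ≠ 0 := by
      intro h
      exact hne0 (s, i) (by rw [h])
    have hca : cAδ δ (t, s, i) = false := by
      simp only [cAδ, decide_eq_false_iff_not]
      rintro ⟨rfl, -⟩
      exact ht0 rfl
    intro u hu
    rw [hca]
    rcases mem_filter.mp hu with ⟨-, h | h⟩
    · rw [h, hca]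
    · obtain ⟨t', s', j⟩ := u
      rw [adj_charac] at h
      simp only [cAδ, decide_eq_false_iff_not]
      rintro ⟨rfl, rfl⟩
      -- u = (0, false, j); derive a contradiction
      rcases h.2 with ⟨he, -⟩ | ⟨hi0, hj0, ⟨hs, he⟩ | ⟨hs, he⟩⟩
      · exact ht0 he.symm
      · -- s = false, but then s' = !s = true ≠ false
        rw [hs] at h
        exact Bool.noConfusion h.1
      · -- s = true, t' = t - 1 = 0, so t = 1 and a = (1, true, 0)
        have : t = 1 := by
          have := he.symm
          rwa [sub_eq_zero] at this
        exact hne1 (by rw [this, hs, hi0])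
  calc DoI (Gδ δ) (cAδ δ)
      ≤ (insert (((1 : Fin δ)), true, (0 : Fin δ))
          (univ.image (fun q : Bool × Fin δ => ((0 : Fin δ), q)))).card :=
        card_le_card hsub
    _ ≤ (univ.image (fun q : Bool × Fin δ => ((0 : Fin δ), q))).card + 1 :=
        card_insert_le _ _
    _ ≤ (univ : Finset (Bool × Fin δ)).card + 1 := by
        exact Nat.add_le_add_right card_image_le 1
    _ = 2 * δ + 1 := by
        rw [card_univ]
        simp [Fintype.card_prod]
        try ring

open scoped Classical in
lemma doiA_pos (hδ : 2 ≤ δ) : 1 ≤ DoI (Gδ δ) (cAδ δ) := by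
  classical
  rw [DoI, Nat.one_le_iff_ne_zero, ← Nat.pos_iff_ne_zero, card_pos]
  refine ⟨((0 : Fin δ), false, (0 : Fin δ)), mem_filter.mpr ⟨mem_univ _, ?_⟩⟩
  apply frac_ne_one (u := ((0 : Fin δ), true, (1 : Fin δ)))
  · rw [closedNbhd, mem_filter]
    refine ⟨mem_univ _, Or.inr ?_⟩
    rw [adj_charac]
    exact ⟨rfl, Or.inl ⟨rfl, fun h => one_ne_zero_fin hδ h.2⟩⟩
  · simp [cAδ]

open scoped Classical in
lemma doiB_ge (hδ : 2 ≤ δ) : δ * δ + δ ≤ DoI (Gδ δ) (cBδ δ) := by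
  classical
  have h1 : (1 : Fin δ) ≠ 0 := one_ne_zero_fin hδ
  set T : Finset (Vert δ) :=
    (univ.image (fun x : Fin δ × Fin δ => (x.1, true, x.2)))
      ∪ (univ.image (fun t : Fin δ => (t, false, (0 : Fin δ)))) with hT
  have hsub : T ⊆ univ.filter (fun v => frac (Gδ δ) (cBδ δ) v ≠ 1) := by
    intro a haT
    rw [mem_filter]
    refine ⟨mem_univ _, ?_⟩
    rw [hT, mem_union] at haT
    rcases haT with h | h
    · rcases mem_image.mp h with ⟨⟨t, j⟩, -, rfl⟩
      have hca : cBδ δ (t, true, j) = false := by simp [cBδ]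
      by_cases hj : j = 0
      · subst hj
        apply frac_ne_one (u := (t - 1, false, (0 : Fin δ)))
        · rw [closedNbhd, mem_filter]
          refine ⟨mem_univ _, Or.inr ?_⟩
          rw [adj_charac]
          exact ⟨rfl, Or.inr ⟨rfl, rfl, Or.inr ⟨rfl, rfl⟩⟩⟩
        · rw [hca]; simp [cBδ]
      · apply frac_ne_one (u := (t, false, (0 : Fin δ)))
        · rw [closedNbhd, mem_filter]
          refine ⟨mem_univ _, Or.inr ?_⟩
          rw [adj_charac]
          exact ⟨rfl, Or.inl ⟨rfl, fun h => hj h.1⟩⟩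
        · rw [hca]; simp [cBδ]
    · rcases mem_image.mp h with ⟨t, -, rfl⟩
      have hca : cBδ δ (t, false, (0 : Fin δ)) = true := by simp [cBδ]
      apply frac_ne_one (u := (t, true, (1 : Fin δ)))
      · rw [closedNbhd, mem_filter]
        refine ⟨mem_univ _, Or.inr ?_⟩
        rw [adj_charac]
        exact ⟨rfl, Or.inl ⟨rfl, fun h => h1 h.2⟩⟩
      · rw [hca]; simp [cBδ]
  have hcard : T.card = δ * δ + δ := by
    rw [hT, card_union_of_disjoint, card_image_of_injective, card_image_of_injective,
      card_univ, card_univ, Fintype.card_prod, Fintype.card_fin]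
    · intro a b hab
      exact congrArg (fun x => x.1) hab
    · intro a b hab
      have e1 := congrArg (fun x : Vert δ => x.1) hab
      have e2 := congrArg (fun x : Vert δ => x.2.2) hab
      exact Prod.ext e1 e2
    · rw [disjoint_left]
      rintro x hx hy
      rcases mem_image.mp hx with ⟨⟨t, j⟩, -, rfl⟩
      rcases mem_image.mp hy with ⟨t', -, he⟩
      exact Bool.noConfusion (congrArg (fun x : Vert δ => x.2.1) he)
  calc δ * δ + δ = T.card := hcard.symm
    _ ≤ _ := card_le_card hsub

end Construction


-- ==================== transport along an equivalence ====================

section Transport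

open scoped Classical

variable {α β : Type*} [Fintype α] [Fintype β] [DecidableEq α] [DecidableEq β]

lemma card_filter_equiv' {P : α → Prop} {Q : β → Prop} [DecidablePred P] [DecidablePred Q]
    (e : α ≃ β) (h : ∀ b, Q b ↔ P (e.symm b)) :
    (univ.filter Q).card = (univ.filter P).card := by
  refine Finset.card_nbij' (fun b => e.symm b) (fun a => e a) ?_ ?_ ?_ ?_
  · intro b hb
    exact mem_filter.mpr ⟨mem_univ _, (h b).mp (mem_filter.mp hb).2⟩
  · intro a ha
    refine mem_filter.mpr ⟨mem_univ _, (h (e a)).mpr ?_⟩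
    simpa using (mem_filter.mp ha).2
  · intro b _; simp
  · intro a _; simp

lemma deg_comap (e : α ≃ β) (G : SimpleGraph α) (x : β) :
    deg (G.comap (⇑e.symm)) x = deg G (e.symm x) :=
  card_filter_equiv' e (fun b => by simp [SimpleGraph.comap_adj])

lemma frac_comap (e : α ≃ β) (G : SimpleGraph α) (c0 : α → Bool) (x : β) :
    frac (G.comap (⇑e.symm)) (fun y => c0 (e.symm y)) x = frac G c0 (e.symm x) := by
  have hden : ((closedNbhd (G.comap (⇑e.symm)) x).card : ℝ)
      = ((closedNbhd G (e.symm x)).card : ℝ) := by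
    norm_cast
    exact card_filter_equiv' e (fun b => by simp [SimpleGraph.comap_adj])
  have hnum : (((closedNbhd (G.comap (⇑e.symm)) x).filter
        (fun u => (fun y => c0 (e.symm y)) u = (fun y => c0 (e.symm y)) x)).card : ℝ)
      = (((closedNbhd G (e.symm x)).filter (fun u => c0 u = c0 (e.symm x))).card : ℝ) := by
    norm_cast
    unfold closedNbhd
    rw [filter_filter, filter_filter]
    exact card_filter_equiv' e (fun b => by simp [SimpleGraph.comap_adj])
  unfold frac
  rw [hden, hnum]

lemma DoI_comap (e : α ≃ β) (G : SimpleGraph α) (c0 : α → Bool) :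
    DoI (G.comap (⇑e.symm)) (fun y => c0 (e.symm y)) = DoI G c0 := by
  unfold DoI
  exact card_filter_equiv' e (fun b => by rw [frac_comap])

end Transport

/-- For every `δ ≥ 2` and every peak `Λ ≤ 1/2`, there exists a game on a
`δ`-regular graph, a swap equilibrium `σ` and a profile `σ*` such that
`DoI(σ*)/DoI(σ) ≥ δ(δ+1)/(2δ+1)`. -/
theorem price_of_anarchy_lower_bound_regular
    (δ : ℕ) (hδ : 2 ≤ δ) (Λ : ℝ) (hΛ : Λ ≤ 1 / 2)
    (p : ℝ → ℝ) (hp : IsSinglePeaked p Λ) :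
    ∃ (n : ℕ) (G : SimpleGraph (Fin n)) (b : ℕ),
      IsGame G b Λ p ∧ (∀ v, deg G v = δ) ∧
      ∃ c cstar : Fin n → Bool, IsProfile c b ∧ IsProfile cstar b ∧
        IsSwapEquilibrium G p c ∧
        ((δ : ℝ) * ((δ : ℝ) + 1)) / (2 * (δ : ℝ) + 1) ≤ (DoI G cstar : ℝ) / (DoI G c : ℝ) := by
  classical
  haveI : NeZero δ := ⟨by omega⟩
  set e := Fintype.equivFin (Vert δ) with he
  set G : SimpleGraph (Fin (Fintype.card (Vert δ))) := (Gδ δ).comap (⇑e.symm) with hG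
  have hreg : ∀ v, deg G v = δ := by
    intro v
    rw [hG, deg_comap]
    exact deg_Gδ hδ _
  refine ⟨Fintype.card (Vert δ), G, δ, ?_, hreg,
    (fun y => cAδ δ (e.symm y)), (fun y => cBδ δ (e.symm y)), ?_, ?_, ?_, ?_⟩
  · refine ⟨?_, by omega, ?_, hp⟩
    · -- connectivity
      have hc := conn_Gδ (δ := δ) hδ
      exact hc.map
        ⟨fun a => e a, by
          intro a b hab
          rw [hG]
          simpa [SimpleGraph.comap_adj] using hab⟩
        (fun x => ⟨e.symm x, e.apply_symm_apply x⟩)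
    · rw [Fintype.card_fin]
      have hcard : Fintype.card (Vert δ) = δ * (2 * δ) := by
        simp [Fintype.card_prod]
        try ring
      rw [hcard]
      exact Nat.le_mul_of_pos_left (2 * δ) (by omega)
  · exact (card_filter_equiv' e (fun b => Iff.rfl)).trans profileA
  · exact (card_filter_equiv' e (fun b => Iff.rfl)).trans profileB
  · -- swap equilibrium
    refine isSwapEquilibrium_of_indep G (show 1 ≤ δ by omega) hreg hΛ hp ?_
    intro v w hv hw hadj
    exact blueA_indep _ _ hv hw hadj
  · -- the ratio bound
    rw [hG, DoI_comap, DoI_comap]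
    have hA1 := doiA_pos (δ := δ) hδ
    have hA2 := doiA_le (δ := δ) hδ
    have hB := doiB_ge (δ := δ) hδ
    have h2 : ((δ:ℝ) * ((δ:ℝ) + 1)) = ((δ * δ + δ : ℕ) : ℝ) := by push_cast; ring
    have h3 : (2 * (δ:ℝ) + 1) = ((2 * δ + 1 : ℕ) : ℝ) := by push_cast; ring
    rw [h2, h3]
    exact div_le_div₀ (by positivity) (by exact_mod_cast hB) (by exact_mod_cast hA1)
      (by exact_mod_cast hA2)


end SwapSchelling
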